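/- There exists g ∈ Aut(T) whose ⟨g⟩-orbits on the vertices of T coincide with the orbits of the full group Aut(T) on T; moreover, any two automorphisms with this property are conjugate in Aut(T). -/

import Mathlib

open Function

structure FRTree : Type 1 where
  V : Type
  [fintypeV : Fintype V]
  [decEqV : DecidableEq V]
  root : V
  parent : V → V
  parent_root : parent root = root
  reaches_root : ∀ v : V, ∃ n : ℕ, parent^[n] v = root

attribute [instance] FRTree.fintypeV FRTree.decEqV

namespace FRTree

/-- `w` is a child of `u`. -/
def IsChild (T : FRTree) (w u : T.V) : Prop := w ≠ T.root ∧ T.parent w = u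

instance (T : FRTree) (w u : T.V) : Decidable (T.IsChild w u) :=
  inferInstanceAs (Decidable (w ≠ T.root ∧ T.parent w = u))

/-- A vertex is internal if it has at least one child. -/
def Internal (T : FRTree) (u : T.V) : Prop := ∃ w, T.IsChild w u

/-- A leaf is a vertex without children. -/
def IsLeaf (T : FRTree) (u : T.V) : Prop := ¬ T.Internal u

/-- Two (non-root) vertices are siblings if they have the same parent. -/
def Siblings (T : FRTree) (u v : T.V) : Prop :=
  u ≠ T.root ∧ v ≠ T.root ∧ T.parent u = T.parent v

/-- The set of vertices of the subtree `T_u`:  `u` together with all of its descendants. -/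
def Desc (T : FRTree) (u : T.V) : Set T.V := {v | ∃ n : ℕ, T.parent^[n] v = u}

/-- First level vertices. -/
def FirstLevel (T : FRTree) (v : T.V) : Prop := v ≠ T.root ∧ T.parent v = T.root

/-- The children of a vertex, as a finset. -/
def children (T : FRTree) (u : T.V) : Finset T.V :=
  Finset.univ.filter (fun w => T.IsChild w u)

end FRTree

open FRTree

/-- Rooted tree homomorphism: sends root to root, non-root vertices to non-root
vertices and commutes with taking the parent.  (This is the same as a graph
homomorphism between the underlying trees sending root to root.) -/
def IsHom (T P : FRTree) (φ : T.V → P.V) : Prop :=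
  φ T.root = P.root ∧
  ∀ v : T.V, v ≠ T.root → φ v ≠ P.root ∧ P.parent (φ v) = φ (T.parent v)

/-- Isomorphism of rooted trees. -/
def IsIsom (T P : FRTree) (φ : T.V → P.V) : Prop :=
  IsHom T P φ ∧ Function.Bijective φ

/-- The automorphism group of a rooted tree, as a subgroup of the permutations of the vertices. -/
def FRTree.Aut (T : FRTree) : Subgroup (Equiv.Perm T.V) where
  carrier := {g : Equiv.Perm T.V | IsHom T T ⇑g}
  one_mem' := ⟨rfl, fun v hv => ⟨hv, rfl⟩⟩
  mul_mem' := by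
    rintro a b ⟨ha0, ha⟩ ⟨hb0, hb⟩
    refine ⟨?_, fun v hv => ?_⟩
    · simp only [Equiv.Perm.coe_mul, Function.comp_apply, hb0, ha0]
    · obtain ⟨hb1, hb2⟩ := hb v hv
      obtain ⟨ha1, ha2⟩ := ha (b v) hb1
      refine ⟨by simpa using ha1, ?_⟩
      simp only [Equiv.Perm.coe_mul, Function.comp_apply]
      rw [ha2, hb2]
  inv_mem' := by
    rintro a ⟨ha0, ha⟩
    refine ⟨a.injective (by simp [ha0]), fun v hv => ?_⟩
    have h1 : a⁻¹ v ≠ T.root := by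
      intro h
      apply hv
      have h2 := congrArg a h
      rwa [show ∀ y, a (a⁻¹ y) = y from Equiv.apply_symm_apply a, ha0] at h2
    obtain ⟨_, h3⟩ := ha (a⁻¹ v) h1
    rw [show ∀ y, a (a⁻¹ y) = y from Equiv.apply_symm_apply a] at h3
    exact ⟨h1, a.injective (by rw [← h3, show ∀ y, a (a⁻¹ y) = y from Equiv.apply_symm_apply a])⟩

/-- `τ` restricts to an isomorphism from the subtree `T_u` onto the subtree `T'_{u'}`.
(The values of `τ` outside of `T_u` are irrelevant.) -/
def IsSubtreeIso (T T' : FRTree) (u : T.V) (u' : T'.V) (τ : T.V → T'.V) : Prop :=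
  τ u = u' ∧ Set.BijOn τ (T.Desc u) (T'.Desc u') ∧
  ∀ w ∈ T.Desc u, w ≠ u → τ w ≠ u' ∧ T'.parent (τ w) = τ (T.parent w)

/-- A tree composition (`P`-composition of `T`): a surjective rooted tree homomorphism
satisfying the regularity condition. -/
def IsComposition (T P : FRTree) (φ : T.V → P.V) : Prop :=
  IsHom T P φ ∧ Function.Surjective φ ∧
  ∀ u v : T.V, u ≠ v → T.Internal u → T.Internal v → T.Siblings u v → φ u = φ v →
    ∃ g ∈ T.Aut, g u = v ∧ ∀ w ∈ T.Desc u, φ (g w) = φ w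
/-- Equivalence of the restrictions `φ_u : T_u → P_{φ u}` and `ψ_{u'} : T'_{u'} → P'_{ψ u'}`
of two tree compositions. -/
def RestrEquiv (T P T' P' : FRTree) (φ : T.V → P.V) (ψ : T'.V → P'.V)
    (u : T.V) (u' : T'.V) : Prop :=
  ∃ (τ : T.V → T'.V) (ω : P.V → P'.V),
    IsSubtreeIso T T' u u' τ ∧ IsSubtreeIso P P' (φ u) (ψ u') ω ∧
    ∀ w ∈ T.Desc u, ω (φ w) = ψ (τ w)

/-- Strict equivalence of the restrictions `δ_u : T_u → Q_{δ u}` and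
`δ'_{u'} : T'_{u'} → Q_{δ' u'}` of two maps into the same tree `Q`
(the isomorphism on the target side is the identity). -/
def RestrStrictEquiv (T Q T' : FRTree) (δ : T.V → Q.V) (δ' : T'.V → Q.V)
    (u : T.V) (u' : T'.V) : Prop :=
  δ u = δ' u' ∧ ∃ τ : T.V → T'.V, IsSubtreeIso T T' u u' τ ∧
    ∀ w ∈ T.Desc u, δ' (τ w) = δ w

/-- Equivalence of tree compositions. -/
def CompEquiv (T P T' P' : FRTree) (φ : T.V → P.V) (ψ : T'.V → P'.V) : Prop :=
  ∃ (τ : T.V → T'.V) (ω : P.V → P'.V),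
    IsIsom T T' τ ∧ IsIsom P P' ω ∧ ω ∘ φ = ψ ∘ τ

/-- Strict equivalence of tree compositions with the same target tree. -/
def StrictEquiv (T T' P : FRTree) (φ : T.V → P.V) (ψ : T'.V → P.V) : Prop :=
  ∃ τ : T.V → T'.V, IsIsom T T' τ ∧ ψ ∘ τ = φ

/-- `α : P → Q` is the quotient of the tree composition `φ : T → P`. -/
def IsQuotient (T P Q : FRTree) (φ : T.V → P.V) (α : P.V → Q.V) : Prop :=
  IsComposition P Q α ∧
  -- (a) for every internal `x ∈ P`, all children of `x` which are leaves are sent by `α`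
  -- to a single vertex, which is the unique child of `α x` that is a leaf
  (∀ x : P.V, P.Internal x → ∀ y y' : P.V, P.IsChild y x → P.IsLeaf y →
    P.IsChild y' x → P.IsLeaf y' → α y = α y') ∧
  (∀ x y : P.V, P.Internal x → P.IsChild y x → P.IsLeaf y →
    Q.IsChild (α y) (α x) ∧ Q.IsLeaf (α y) ∧
      ∀ z : Q.V, Q.IsChild z (α x) → Q.IsLeaf z → z = α y) ∧
  -- (b) distinct internal siblings of `Q` separate inequivalent restrictions of `φ`
  (∀ a b : Q.V, a ≠ b → Q.Internal a → Q.Internal b → Q.Siblings a b →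
    ∀ u v : T.V, α (φ u) = a → α (φ v) = b → ¬ RestrEquiv T P T P φ φ u v) ∧
  -- (c) vertices with the same image under `α ∘ φ` have equivalent restrictions of `φ`,
  -- and strictly equivalent restrictions of `α ∘ φ`
  (∀ u w : T.V, T.Internal u → T.Internal w → α (φ u) = α (φ w) →
    RestrEquiv T P T P φ φ u w ∧ RestrStrictEquiv T Q T (α ∘ φ) (α ∘ φ) u w)

/-- The type `|φ⁻¹|` of a tree composition: `|φ⁻¹|(root) = 0` and, for `y` non-root with
parent `x`, `|φ⁻¹|(y) = |φ⁻¹(y) ∩ Ch(u)|` where `u` is any vertex with `φ u = x` (for a tree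
composition this number does not depend on the choice of `u`, so it equals the `sSup` below). -/
noncomputable def typeOf (T P : FRTree) (φ : T.V → P.V) (y : P.V) : ℕ :=
  if y = P.root then 0
  else sSup {n : ℕ | ∃ u : T.V, φ u = P.parent y ∧
    n = (Finset.univ.filter (fun w => T.IsChild w u ∧ φ w = y)).card}

/-- The partition `λ^b` associated to a non-root vertex `b` of the quotient tree:
the multiset of the numbers `|φ⁻¹|(y)`, for `y` ranging over the children of `x`
with `α y = b` (where `x` is any vertex of `P` with `α x = ` parent of `b`). -/
noncomputable def assocPartition (T P Q : FRTree) (φ : T.V → P.V) (α : P.V → Q.V)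
    (x : P.V) (b : Q.V) : Multiset ℕ :=
  ((Finset.univ.filter (fun y => P.IsChild y x ∧ α y = b)).val).map (typeOf T P φ)

/-- `Λ` is the partitional labeling of the quotient tree `Q` associated to the tree
composition `φ : T → P` (with quotient map `α : P → Q`). -/
def IsAssocLabeling (T P Q : FRTree) (φ : T.V → P.V) (α : P.V → Q.V)
    (Λ : Q.V → Multiset ℕ) : Prop :=
  IsQuotient T P Q φ α ∧
  ∀ b : Q.V, b ≠ Q.root → ∀ x : P.V, α x = Q.parent b →
    Λ b = assocPartition T P Q φ α x b

/-- A partitional labeling: every non-root vertex is labeled by an integer partition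
(a multiset of positive integers). -/
def IsPartitionalLabeling (Q : FRTree) (Λ : Q.V → Multiset ℕ) : Prop :=
  ∀ a : Q.V, a ≠ Q.root → ∀ n ∈ Λ a, 0 < n

/-- Isomorphism of the restrictions of two partitional labelings to the subtrees `Q_a` and
`Q'_b`, the roots `a`, `b` being regarded as unlabeled. -/
def LabelRestrIso (Q Q' : FRTree) (Λ : Q.V → Multiset ℕ) (Ξ : Q'.V → Multiset ℕ)
    (a : Q.V) (b : Q'.V) : Prop :=
  ∃ γ : Q.V → Q'.V, IsSubtreeIso Q Q' a b γ ∧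
    ∀ c ∈ Q.Desc a, c ≠ a → Λ c = Ξ (γ c)

/-- A tree of partitions. -/
def IsTreeOfPartitions (Q : FRTree) (Λ : Q.V → Multiset ℕ) : Prop :=
  IsPartitionalLabeling Q Λ ∧
  (∀ x y y' : Q.V, Q.IsChild y x → Q.IsLeaf y → Q.IsChild y' x → Q.IsLeaf y' → y = y') ∧
  (∀ a b : Q.V, a ≠ b → Q.Internal a → Q.Internal b → Q.Siblings a b →
    ¬ LabelRestrIso Q Q Λ Λ a b)

/-- Isomorphism of partitional labelings. -/
def LabelIso (Q Q' : FRTree) (Λ : Q.V → Multiset ℕ) (Ξ : Q'.V → Multiset ℕ) : Prop :=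
  ∃ γ : Q.V → Q'.V, IsIsom Q Q' γ ∧ ∀ a : Q.V, a ≠ Q.root → Λ a = Ξ (γ a)

/-- `δ : T → Q` is a realization of the tree of partitions `(Λ, Q)` as a tree of
partitions of `T`. -/
def IsRealization (T Q : FRTree) (Λ : Q.V → Multiset ℕ) (δ : T.V → Q.V) : Prop :=
  IsComposition T Q δ ∧
  ∀ a : Q.V, Q.Internal a → ∀ u : T.V, δ u = a →
    ∑ b ∈ Q.children a, (Λ b).sum = (T.children u).card

/-- `(Λ, Q)` belongs to `Par(T)`. -/
def InParT (T Q : FRTree) (Λ : Q.V → Multiset ℕ) : Prop :=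
  IsTreeOfPartitions Q Λ ∧ ∃ δ : T.V → Q.V, IsRealization T Q Λ δ

/-- The compatibility condition on `α : P → Q` entering the definition of `Par(T, P)`:
at every vertex of `α⁻¹(a)` the numbers of children is the sum of the lengths of the
partitions labeling the children of `a`. -/
def LengthCond (P Q : FRTree) (Λ : Q.V → Multiset ℕ) (α : P.V → Q.V) : Prop :=
  ∀ a : Q.V, Q.Internal a → ∀ x : P.V, α x = a →
    ∑ b ∈ Q.children a, Multiset.card (Λ b) = (P.children x).card

/-- `(Λ, Q)` belongs to `Par(T, P)`. -/
def InParTP (T P Q : FRTree) (Λ : Q.V → Multiset ℕ) : Prop :=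
  InParT T Q Λ ∧ ∃ α : P.V → Q.V, IsComposition P Q α ∧ LengthCond P Q Λ α
/-- A common refinement of the tree compositions `φ : T → P` and `ψ : T → M`. -/
def IsCommonRefinement (T P M R : FRTree) (φ : T.V → P.V) (ψ : T.V → M.V)
    (ρ : T.V → R.V) (ϑ : R.V → P.V) (τ : R.V → M.V) : Prop :=
  IsComposition T R ρ ∧ IsComposition R P ϑ ∧ IsComposition R M τ ∧
  ϑ ∘ ρ = φ ∧ τ ∘ ρ = ψ

/-- Equivalence of the restricted common refinements `ρ_u` (of `(φ_u, ψ_u)`) and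
`ρ_v` (of `(φ_v, ψ_v)`), where `ρ u = a`, `ρ v = b`, `ϑ a = ϑ b` and `τ a = τ b`. -/
def RestrRefEquiv (T P M R : FRTree) (φ : T.V → P.V) (ψ : T.V → M.V)
    (ρ : T.V → R.V) (ϑ : R.V → P.V) (τ : R.V → M.V)
    (u v : T.V) (a b : R.V) : Prop :=
  ∃ (ζ : T.V → T.V) (γ : R.V → R.V),
    IsSubtreeIso T T u v ζ ∧ IsSubtreeIso R R a b γ ∧
    (∀ w ∈ T.Desc u, φ (ζ w) = φ w) ∧
    (∀ w ∈ T.Desc u, ψ (ζ w) = ψ w) ∧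
    (∀ w ∈ T.Desc u, ρ (ζ w) = γ (ρ w)) ∧
    (∀ r ∈ R.Desc a, ϑ (γ r) = ϑ r) ∧
    (∀ r ∈ R.Desc a, τ (γ r) = τ r)

/-- The coarseness condition for a common refinement. -/
def Coarseness (T P M R : FRTree) (φ : T.V → P.V) (ψ : T.V → M.V)
    (ρ : T.V → R.V) (ϑ : R.V → P.V) (τ : R.V → M.V) : Prop :=
  (∀ a b : R.V, a ≠ b → R.Internal a → R.Internal b → R.Siblings a b →
    ϑ a = ϑ b → τ a = τ b →
    ∀ u v : T.V, ρ u = a → ρ v = b →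
      ¬ RestrRefEquiv T P M R φ ψ ρ ϑ τ u v a b) ∧
  (∀ a b : R.V, a ≠ b → R.IsLeaf a → R.IsLeaf b → R.Siblings a b →
    ¬ (ϑ a = ϑ b ∧ τ a = τ b))

/-- Equivalence of two common refinements of the same couple `(φ, ψ)` of tree
compositions of `T`. -/
def RefEquiv (T P M R R' : FRTree) (φ : T.V → P.V) (ψ : T.V → M.V)
    (ρ : T.V → R.V) (ϑ : R.V → P.V) (τ : R.V → M.V)
    (ρ' : T.V → R'.V) (ϑ' : R'.V → P.V) (τ' : R'.V → M.V) : Prop :=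
  ∃ (ζ : T.V → T.V) (γ : R.V → R'.V),
    IsIsom T T ζ ∧ IsIsom R R' γ ∧
    φ ∘ ζ = φ ∧ ψ ∘ ζ = ψ ∧ ρ' ∘ ζ = γ ∘ ρ ∧ ϑ' ∘ γ = ϑ ∧ τ' ∘ γ = τ

/-- The orbit of the tree composition `φ` under the action `g • φ = φ ∘ g⁻¹` of `Aut T`. -/
def OrbitSet (T P : FRTree) (φ : T.V → P.V) : Type :=
  {ψ : T.V → P.V // ∃ g ∈ T.Aut, ψ = φ ∘ ⇑g⁻¹}

/-- The action of `Aut T` on the orbit of `φ`. -/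
def orbAct (T P : FRTree) (φ : T.V → P.V) (g : T.Aut)
    (ψ : OrbitSet T P φ) : OrbitSet T P φ :=
  ⟨ψ.1 ∘ ⇑((g : Equiv.Perm T.V))⁻¹, by
    obtain ⟨h, hh, hψ⟩ := ψ.2
    refine ⟨(g : Equiv.Perm T.V) * h, mul_mem g.2 hh, ?_⟩
    rw [hψ]
    funext x
    simp [Function.comp, mul_inv_rev]⟩

/-- The permutation representation `M^{|φ⁻¹|}` of `Aut T` on the (complex functions on
the) orbit of the tree composition `φ`. -/
noncomputable def permRep (T P : FRTree) (φ : T.V → P.V) :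
    Representation ℂ (T.Aut) (OrbitSet T P φ → ℂ) where
  toFun g :=
    { toFun := fun F ψ => F (orbAct T P φ g⁻¹ ψ)
      map_add' := fun _ _ => rfl
      map_smul' := fun _ _ => rfl }
  map_one' := by
    refine LinearMap.ext fun F => funext fun ψ => ?_
    show F (orbAct T P φ 1⁻¹ ψ) = F ψ
    have h : orbAct T P φ 1⁻¹ ψ = ψ := Subtype.ext (funext fun x => by simp [orbAct])
    rw [h]
  map_mul' := by
    intro a b
    refine LinearMap.ext fun F => funext fun ψ => ?_
    show F (orbAct T P φ (a * b)⁻¹ ψ) = F (orbAct T P φ b⁻¹ (orbAct T P φ a⁻¹ ψ))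
    have h : orbAct T P φ (a * b)⁻¹ ψ = orbAct T P φ b⁻¹ (orbAct T P φ a⁻¹ ψ) :=
      Subtype.ext (funext fun x => by simp [orbAct, mul_inv_rev])
    rw [h]

/-- Equivalence of two representations. -/
def RepEquiv {G : Type*} [Group G] {V W : Type*}
    [AddCommGroup V] [Module ℂ V] [AddCommGroup W] [Module ℂ W]
    (ρ : Representation ℂ G V) (σ : Representation ℂ G W) : Prop :=
  ∃ e : V ≃ₗ[ℂ] W, ∀ (g : G) (v : V), e (ρ g v) = σ g (e v)

/-- Irreducibility of a representation. -/
def IsIrreducibleRep {G V : Type*} [Group G] [AddCommGroup V] [Module ℂ V]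
    (ρ : Representation ℂ G V) : Prop :=
  (∃ v : V, v ≠ 0) ∧
  ∀ U : Submodule ℂ V, (∀ g : G, ∀ v ∈ U, ρ g v ∈ U) → U = ⊥ ∨ U = ⊤

/-- The space of equivariant linear maps between two representations; when `ρ` is
irreducible, its dimension is the multiplicity of `ρ` in `σ`. -/
def equivariantHoms {G : Type*} [Group G] {V W : Type*}
    [AddCommGroup V] [Module ℂ V] [AddCommGroup W] [Module ℂ W]
    (ρ : Representation ℂ G V) (σ : Representation ℂ G W) :
    Submodule ℂ (V →ₗ[ℂ] W) where
  carrier := {f | ∀ (g : G) (v : V), f (ρ g v) = σ g (f v)}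
  add_mem' := by
    intro a b ha hb g v
    simp [ha g v, hb g v]
  zero_mem' := by intro g v; simp
  smul_mem' := by
    intro c f hf g v
    simp [hf g v]

/-- The stabilizer `K_φ` of a tree composition `φ` in `Aut T`. -/
def stab (T P : FRTree) (φ : T.V → P.V) : Subgroup (T.Aut) where
  carrier := {g | ∀ x : T.V, φ ((g : Equiv.Perm T.V) x) = φ x}
  one_mem' := fun _ => rfl
  mul_mem' := by
    intro a b ha hb x
    simp only [Subgroup.coe_mul, Equiv.Perm.mul_apply]
    rw [ha ((b : Equiv.Perm T.V) x), hb x]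
  inv_mem' := by
    intro a ha x
    have := ha (((a : Equiv.Perm T.V))⁻¹ x)
    simp only [show ∀ y, (a : Equiv.Perm T.V) ((a : Equiv.Perm T.V)⁻¹ y) = y from Equiv.apply_symm_apply _] at this
    simpa using this.symm

/-- The space of the representation of `G` induced by the character `χ` of the
subgroup `K`: complex functions on `G` which are `χ`-covariant for right translation
by `K`; `G` acts by left translation. -/
noncomputable def IndSpace (G : Type*) [Group G] (K : Subgroup G) (χ : K →* ℂ) :
    Submodule ℂ (G → ℂ) where
  carrier := {f | ∀ (g : G) (k : K), f (g * k) = χ k * f g}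
  add_mem' := by
    intro a b ha hb g k
    simp only [Pi.add_apply, ha g k, hb g k]
    ring
  zero_mem' := by intro g k; simp
  smul_mem' := by
    intro c f hf g k
    simp only [Pi.smul_apply, smul_eq_mul, hf g k]
    ring

/-- The representation of `G` induced by the character `χ` of the subgroup `K`. -/
noncomputable def indRep (G : Type*) [Group G] (K : Subgroup G) (χ : K →* ℂ) :
    Representation ℂ G (IndSpace G K χ) where
  toFun g :=
    { toFun := fun f => ⟨fun x => (f : G → ℂ) (g⁻¹ * x), by
        intro x k
        have h := f.2 (g⁻¹ * x) k
        simpa [mul_assoc] using h⟩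
      map_add' := by intro a b; apply Subtype.ext; funext x; rfl
      map_smul' := by intro c a; apply Subtype.ext; funext x; rfl }
  map_one' := by
    refine LinearMap.ext fun f => Subtype.ext (funext fun x => ?_)
    simp
  map_mul' := by
    intro a b
    refine LinearMap.ext fun f => Subtype.ext (funext fun x => ?_)
    simp [mul_assoc]

/-- A sibling swap: an automorphism of order two exchanging the subtrees rooted at two
distinct siblings `u`, `v` and fixing everything else.  The sign representation of
`Aut T` is the unique homomorphism `Aut T →* ℂ` taking the value `-1` at every
sibling swap. -/
def IsSiblingSwap (T : FRTree) (g : Equiv.Perm T.V) : Prop :=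
  ∃ u v : T.V, u ≠ v ∧ T.Siblings u v ∧ g u = v ∧
    (∀ w : T.V, w ∉ T.Desc u → w ∉ T.Desc v → g w = w) ∧ g * g = 1

/-- The conjugate (transpose) of an integer partition, encoded as a multiset. -/
def conjP (m : Multiset ℕ) : Multiset ℕ :=
  ((Multiset.range m.sum).map fun i => Multiset.card (m.filter fun p => i < p)).filter
    fun n => 0 < n

/-- Two tree compositions of the same tree have `0-1` intersection. -/
def ZeroOneIntersection (T P M : FRTree) (φ : T.V → P.V) (ψ : T.V → M.V) : Prop :=
  ∀ v : T.V, T.Internal v → ∀ x : P.V, ∀ y : M.V,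
    P.IsChild x (φ v) → M.IsChild y (ψ v) →
    {w : T.V | φ w = x ∧ ψ w = y}.Subsingleton

/-- `φᵗ : T → Pᵗ` (with quotient `αᵗ`) is a transpose of the tree composition
`φ : T → P` with quotient `α : P → Q` and associated tree of partitions `Λ`. -/
def IsTranspose (T P Q Pt : FRTree) (φ : T.V → P.V) (α : P.V → Q.V)
    (Λ : Q.V → Multiset ℕ) (φt : T.V → Pt.V) (αt : Pt.V → Q.V) : Prop :=
  IsComposition T Pt φt ∧
  IsAssocLabeling T Pt Q φt αt (fun a => conjP (Λ a)) ∧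
  (αt ∘ φt = α ∘ φ) ∧
  ZeroOneIntersection T P Pt φ φt

set_option synthInstance.maxHeartbeats 400000 in
/-- The multiplicity of the irreducible representation `ρ` inside `σ`: the dimension of
the space of equivariant linear maps. -/
noncomputable def repMultiplicity {G : Type*} [Group G] {V W : Type*}
    [AddCommGroup V] [Module ℂ V] [AddCommGroup W] [Module ℂ W]
    (ρ : Representation ℂ G V) (σ : Representation ℂ G W) : ℕ :=
  Module.finrank ℂ ↥(equivariantHoms ρ σ)
open scoped Classical

theorem Equiv.Perm.apply_inv_self {α : Type*} (e : Equiv.Perm α) (x : α) : e (e⁻¹ x) = x :=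
  Equiv.apply_symm_apply e x

theorem Equiv.Perm.inv_apply_self {α : Type*} (e : Equiv.Perm α) (x : α) : e⁻¹ (e x) = x :=
  Equiv.symm_apply_apply e x

namespace STAux

variable (T : FRTree)

open FRTree

lemma root_of_fixed {v : T.V} (h : T.parent v = v) : v = T.root := by
  obtain ⟨n, hn⟩ := T.reaches_root v
  have : ∀ k, T.parent^[k] v = v := by
    intro k; induction k with
    | zero => rfl
    | succ k ih => rw [Function.iterate_succ_apply', ih, h]
  rw [this n] at hn; exact hn

lemma mem_aut_iff (g : Equiv.Perm T.V) :
    g ∈ T.Aut ↔ ∀ v, T.parent (g v) = g (T.parent v) := by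
  constructor
  · rintro ⟨h0, h⟩ v
    by_cases hv : v = T.root
    · subst hv; rw [T.parent_root, h0, T.parent_root]
    · exact (h v hv).2
  · intro h
    have hroot : g T.root = T.root := by
      apply root_of_fixed
      rw [h, T.parent_root]
    refine ⟨hroot, fun v hv => ⟨?_, h v⟩⟩
    intro hgv
    exact hv (g.injective (hgv.trans hroot.symm))

lemma aut_root {g : Equiv.Perm T.V} (hg : g ∈ T.Aut) : g T.root = T.root := hg.1

lemma aut_iterate {g : Equiv.Perm T.V} (hg : g ∈ T.Aut) (n : ℕ) (v : T.V) :
    T.parent^[n] (g v) = g (T.parent^[n] v) := by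
  induction n generalizing v with
  | zero => rfl
  | succ n ih =>
    rw [Function.iterate_succ_apply', Function.iterate_succ_apply', ih,
      (mem_aut_iff T g).1 hg]

lemma self_mem_desc (c : T.V) : c ∈ T.Desc c := ⟨0, rfl⟩

lemma parent_mem_desc {v c : T.V} (h : v ∈ T.Desc c) (hv : v ≠ c) :
    T.parent v ∈ T.Desc c := by
  obtain ⟨n, hn⟩ := h
  cases n with
  | zero => exact absurd hn hv
  | succ n => exact ⟨n, by rwa [Function.iterate_succ_apply] at hn⟩

lemma root_not_mem_desc {c : T.V} (hc : T.FirstLevel c) : T.root ∉ T.Desc c := by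
  rintro ⟨n, hn⟩
  have : ∀ k, T.parent^[k] T.root = T.root := by
    intro k; induction k with
    | zero => rfl
    | succ k ih => rw [Function.iterate_succ_apply', ih, T.parent_root]
  rw [this n] at hn; exact hc.1 hn.symm

lemma aut_mem_desc {g : Equiv.Perm T.V} (hg : g ∈ T.Aut) {v c : T.V} :
    v ∈ T.Desc c ↔ g v ∈ T.Desc (g c) := by
  constructor
  · rintro ⟨n, hn⟩; exact ⟨n, by rw [aut_iterate T hg, hn]⟩
  · rintro ⟨n, hn⟩
    refine ⟨n, ?_⟩
    rw [aut_iterate T hg] at hn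
    exact g.injective hn

lemma aut_firstLevel {g : Equiv.Perm T.V} (hg : g ∈ T.Aut) {c : T.V}
    (hc : T.FirstLevel c) : T.FirstLevel (g c) := by
  refine ⟨fun h => hc.1 (g.injective (h.trans (aut_root T hg).symm)), ?_⟩
  rw [(mem_aut_iff T g).1 hg, hc.2, aut_root T hg]

noncomputable def depth (v : T.V) : ℕ := Nat.find (T.reaches_root v)

noncomputable def anc (v : T.V) : T.V := T.parent^[depth T v - 1] v

lemma anc_root : anc T T.root = T.root := by
  have h0 : depth T T.root = 0 := by
    simp [depth, Nat.find_eq_zero]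
  simp [anc, h0]

lemma anc_spec {v : T.V} (hv : v ≠ T.root) :
    T.FirstLevel (anc T v) ∧ v ∈ T.Desc (anc T v) := by
  have hd : depth T v ≠ 0 := by
    intro h
    have := Nat.find_spec (T.reaches_root v)
    rw [show Nat.find (T.reaches_root v) = depth T v from rfl, h] at this
    exact hv this
  obtain ⟨n, hn⟩ : ∃ n, depth T v = n + 1 := ⟨depth T v - 1, (Nat.succ_pred_eq_of_ne_zero hd).symm⟩
  have hspec : T.parent^[n+1] v = T.root := by
    have := Nat.find_spec (T.reaches_root v); rwa [show Nat.find (T.reaches_root v) = depth T v from rfl, hn] at this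
  have hmin : T.parent^[n] v ≠ T.root := by
    have hlt : n < Nat.find (T.reaches_root v) := by
      rw [show Nat.find (T.reaches_root v) = depth T v from rfl, hn]; omega
    exact Nat.find_min (T.reaches_root v) hlt
  have hanc : anc T v = T.parent^[n] v := by simp [anc, hn]
  refine ⟨⟨by rw [hanc]; exact hmin, ?_⟩, ⟨n, hanc.symm⟩⟩
  rw [hanc, show T.parent (T.parent^[n] v) = T.parent^[n+1] v from
    (Function.iterate_succ_apply' _ _ _).symm]
  exact hspec

lemma anc_unique {v c : T.V} (hc : T.FirstLevel c) (hv : v ∈ T.Desc c) :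
    anc T v = c := by
  have hvr : v ≠ T.root := by
    rintro rfl; exact root_not_mem_desc T hc hv
  obtain ⟨hfl, ⟨k', hk'⟩⟩ := anc_spec T hvr
  obtain ⟨k, hk⟩ := hv
  have hiter : ∀ (d : T.V), d ≠ T.root → T.parent d = T.root → ∀ j, 1 ≤ j → T.parent^[j] d = T.root := by
    intro d _ hd j hj
    induction j with
    | zero => omega
    | succ j ih =>
      cases Nat.eq_or_lt_of_le hj with
      | inl h => rw [← h]; simpa using hd
      | inr h =>
        rw [Function.iterate_succ_apply', ih (by omega), T.parent_root]
  rcases le_or_gt k k' with h | h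
  · -- anc v = parent^[k'-k] c
    have : T.parent^[k' - k] c = anc T v := by
      rw [← hk, ← Function.iterate_add_apply, Nat.sub_add_cancel h, hk']
    rcases Nat.eq_or_lt_of_le (Nat.zero_le (k' - k)) with h0 | h0
    · rw [← this, ← h0]; rfl
    · exfalso
      apply hfl.1
      rw [← this]
      exact hiter c hc.1 hc.2 _ h0
  · exfalso
    have : T.parent^[k - k'] (anc T v) = c := by
      rw [← hk', ← Function.iterate_add_apply, Nat.sub_add_cancel (le_of_lt h), hk]
    apply hc.1
    rw [← this]
    exact hiter _ hfl.1 hfl.2 _ (by omega)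

lemma mem_desc_iff_anc {c : T.V} (hc : T.FirstLevel c) {v : T.V} :
    v ∈ T.Desc c ↔ v ≠ T.root ∧ anc T v = c := by
  constructor
  · intro h
    exact ⟨fun hr => root_not_mem_desc T hc (hr ▸ h), anc_unique T hc h⟩
  · rintro ⟨hv, rfl⟩
    exact (anc_spec T hv).2

lemma desc_disjoint {c d v : T.V} (hc : T.FirstLevel c) (hd : T.FirstLevel d)
    (h1 : v ∈ T.Desc c) (h2 : v ∈ T.Desc d) : c = d := by
  rw [← anc_unique T hc h1, ← anc_unique T hd h2]

lemma anc_parent {v : T.V} (hv : v ≠ T.root) (hp : T.parent v ≠ T.root) :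
    anc T (T.parent v) = anc T v := by
  obtain ⟨hfl, hm⟩ := anc_spec T hv
  have hvne : v ≠ anc T v := by
    intro heq; exact hp (by rw [heq]; exact hfl.2)
  exact anc_unique T hfl (parent_mem_desc T hm hvne)

end STAux
namespace STAux

variable (T : FRTree)
open FRTree

noncomputable def Sparent (c : T.V) : {v : T.V // v ∈ T.Desc c} → {v : T.V // v ∈ T.Desc c} :=
  fun x => if h : x.1 = c then ⟨c, self_mem_desc T c⟩
    else ⟨T.parent x.1, parent_mem_desc T x.2 h⟩

lemma Sparent_reaches (c : T.V) : ∀ (k : ℕ) (v : T.V) (hv : v ∈ T.Desc c),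
    T.parent^[k] v = c → ∃ n, (Sparent T c)^[n] ⟨v, hv⟩ = ⟨c, self_mem_desc T c⟩ := by
  intro k
  induction k with
  | zero => intro v hv hk; exact ⟨0, Subtype.ext hk⟩
  | succ k ih =>
    intro v hv hk
    by_cases h : v = c
    · exact ⟨0, Subtype.ext h⟩
    · have hk' : T.parent^[k] (T.parent v) = c := by
        rwa [Function.iterate_succ_apply] at hk
      obtain ⟨n, hn⟩ := ih (T.parent v) (parent_mem_desc T hv h) hk'
      refine ⟨n + 1, ?_⟩
      rw [Function.iterate_succ_apply]
      convert hn using 2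
      simp [Sparent, h]

/-- The subtree rooted at `c`, as an `FRTree`. -/
noncomputable def S (c : T.V) : FRTree where
  V := {v : T.V // v ∈ T.Desc c}
  fintypeV := (Set.toFinite _).fintype
  decEqV := inferInstance
  root := ⟨c, self_mem_desc T c⟩
  parent := Sparent T c
  parent_root := by simp [Sparent]
  reaches_root := by
    rintro ⟨v, hv⟩
    obtain ⟨k, hk⟩ := hv
    exact Sparent_reaches T c k v ⟨k, hk⟩ hk

lemma S_root (c : T.V) : (S T c).root = ⟨c, self_mem_desc T c⟩ := rfl

lemma S_parent (c : T.V) (x : (S T c).V) (h : x.1 ≠ c) :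
    (S T c).parent x = ⟨T.parent x.1, parent_mem_desc T x.2 h⟩ := by
  simp [S, Sparent, h]

lemma S_parent_coe (c : T.V) (x : (S T c).V) (h : x.1 ≠ c) :
    ((S T c).parent x).1 = T.parent x.1 := by rw [S_parent T c x h]

/-- Paired partial isomorphism between subtrees `Desc c` and `Desc d`. -/
def PPair (c d : T.V) (f f' : T.V → T.V) : Prop :=
  f c = d ∧ f' d = c ∧
  (∀ v ∈ T.Desc c, f v ∈ T.Desc d) ∧ (∀ w ∈ T.Desc d, f' w ∈ T.Desc c) ∧
  (∀ v ∈ T.Desc c, f' (f v) = v) ∧ (∀ w ∈ T.Desc d, f (f' w) = w) ∧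
  (∀ v ∈ T.Desc c, v ≠ c → T.parent (f v) = f (T.parent v)) ∧
  (∀ w ∈ T.Desc d, w ≠ d → T.parent (f' w) = f' (T.parent w))

lemma PPair.symm {c d : T.V} {f f' : T.V → T.V} (h : PPair T c d f f') :
    PPair T d c f' f := by
  obtain ⟨h1, h2, h3, h4, h5, h6, h7, h8⟩ := h
  exact ⟨h2, h1, h4, h3, h6, h5, h8, h7⟩

lemma PPair.id (c : T.V) : PPair T c c id id := by
  refine ⟨rfl, rfl, ?_, ?_, ?_, ?_, ?_, ?_⟩ <;> intros <;> simp_all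

lemma PPair.comp {c d e : T.V} {f f' g g' : T.V → T.V}
    (hf : PPair T c d f f') (hg : PPair T d e g g') :
    PPair T c e (fun v => g (f v)) (fun v => f' (g' v)) := by
  obtain ⟨f1, f2, f3, f4, f5, f6, f7, f8⟩ := hf
  obtain ⟨g1, g2, g3, g4, g5, g6, g7, g8⟩ := hg
  refine ⟨by show g (f c) = e; rw [f1, g1], by show f' (g' e) = c; rw [g2, f2],
    fun v hv => g3 _ (f3 v hv),
    fun w hw => f4 _ (g4 w hw),
    fun v hv => by show f' (g' (g (f v))) = v; rw [g5 _ (f3 v hv), f5 v hv],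
    fun w hw => by show g (f (f' (g' w))) = w; rw [f6 _ (g4 w hw), g6 w hw], ?_, ?_⟩
  · intro v hv hvc
    show T.parent (g (f v)) = g (f (T.parent v))
    have hfv : f v ∈ T.Desc d := f3 v hv
    have hfvd : f v ≠ d := by
      intro h; apply hvc
      have := f5 v hv; rw [h, f2] at this; exact this.symm
    rw [g7 _ hfv hfvd, f7 v hv hvc]
  · intro w hw hwe
    show T.parent (f' (g' w)) = f' (g' (T.parent w))
    have hgw : g' w ∈ T.Desc d := g4 w hw
    have hgwd : g' w ≠ d := by
      intro h; apply hwe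
      have := g6 w hw; rw [h, g1] at this; exact this.symm
    rw [f8 _ hgw hgwd, g8 w hw hwe]

/-- An automorphism restricts to a `PPair`. -/
lemma PPair.ofAut {g : Equiv.Perm T.V} (hg : g ∈ T.Aut) (c : T.V) :
    PPair T c (g c) ⇑g ⇑g⁻¹ := by
  refine ⟨rfl, by simp, fun v hv => (aut_mem_desc T hg).1 hv,
    fun w hw => ?_, fun v _ => by simp, fun w _ => by simp, ?_, ?_⟩
  · have := (aut_mem_desc T (inv_mem hg) (v := w) (c := g c)).1 hw
    simpa using this
  · intro v _ _; exact (mem_aut_iff T g).1 hg v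
  · intro w _ _; exact (mem_aut_iff T g⁻¹).1 (inv_mem hg) w

/-- lift a function on the subtree to a function on `T.V`. -/
noncomputable def lift (c : T.V) (σ : (S T c).V → (S T c).V) : T.V → T.V :=
  fun v => if h : v ∈ T.Desc c then (σ ⟨v, h⟩).1 else v

lemma lift_apply (c : T.V) (σ : (S T c).V → (S T c).V) {v : T.V} (h : v ∈ T.Desc c) :
    lift T c σ v = (σ ⟨v, h⟩).1 := dif_pos h

lemma lift_coe (c : T.V) (σ : (S T c).V → (S T c).V) (x : (S T c).V) :
    lift T c σ x.1 = (σ x).1 := by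
  rw [lift_apply T c σ x.2]
  congr

/-- Automorphisms of the subtree give `PPair c c`. -/
lemma PPair.ofSubAut {c : T.V} {σ : Equiv.Perm (S T c).V} (hσ : σ ∈ (S T c).Aut) :
    PPair T c c (lift T c ⇑σ) (lift T c ⇑σ⁻¹) := by
  have hroot : σ ⟨c, self_mem_desc T c⟩ = ⟨c, self_mem_desc T c⟩ := aut_root (S T c) hσ
  have hroot' : σ⁻¹ ⟨c, self_mem_desc T c⟩ = ⟨c, self_mem_desc T c⟩ :=
    aut_root (S T c) (inv_mem hσ)
  have key : ∀ (π : Equiv.Perm (S T c).V), π ∈ (S T c).Aut →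
      ∀ v (hv : v ∈ T.Desc c), v ≠ c → T.parent (lift T c ⇑π v) = lift T c ⇑π (T.parent v) := by
    intro π hπ v hv hvc
    have hπroot : π ⟨c, self_mem_desc T c⟩ = ⟨c, self_mem_desc T c⟩ := aut_root (S T c) hπ
    have hne : (π ⟨v, hv⟩).1 ≠ c := by
      intro h
      exact hvc (congrArg Subtype.val (π.injective ((Subtype.ext h).trans hπroot.symm)))
    have hcomm := (mem_aut_iff (S T c) π).1 hπ ⟨v, hv⟩
    rw [S_parent T c ⟨v, hv⟩ hvc] at hcomm
    have := congrArg Subtype.val hcomm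
    rw [S_parent_coe T c _ hne] at this
    rw [lift_apply T c _ hv, this,
      lift_apply T c _ (parent_mem_desc T hv hvc)]
  refine ⟨?_, ?_, ?_, ?_, ?_, ?_, ?_, ?_⟩
  · rw [lift_apply T c _ (self_mem_desc T c)]; exact congrArg Subtype.val hroot
  · rw [lift_apply T c _ (self_mem_desc T c)]; exact congrArg Subtype.val hroot'
  · intro v hv; rw [lift_apply T c _ hv]; exact (σ ⟨v, hv⟩).2
  · intro v hv; rw [lift_apply T c _ hv]; exact (σ⁻¹ ⟨v, hv⟩).2
  · intro v hv
    rw [lift_apply T c _ hv, lift_apply T c _ (σ ⟨v, hv⟩).2]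
    exact congrArg Subtype.val (σ.symm_apply_apply ⟨v, hv⟩)
  · intro v hv
    rw [lift_apply T c _ hv, lift_apply T c _ (σ⁻¹ ⟨v, hv⟩).2]
    exact congrArg Subtype.val (σ.apply_symm_apply ⟨v, hv⟩)
  · exact key σ hσ
  · exact key σ⁻¹ (inv_mem hσ)

/-- `PPair c c` gives an automorphism of the subtree. -/
noncomputable def toSubPerm {c : T.V} {f f' : T.V → T.V} (h : PPair T c c f f') :
    Equiv.Perm (S T c).V where
  toFun x := ⟨f x.1, h.2.2.1 x.1 x.2⟩
  invFun x := ⟨f' x.1, h.2.2.2.1 x.1 x.2⟩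
  left_inv x := Subtype.ext (h.2.2.2.2.1 x.1 x.2)
  right_inv x := Subtype.ext (h.2.2.2.2.2.1 x.1 x.2)

lemma toSubPerm_mem {c : T.V} {f f' : T.V → T.V} (h : PPair T c c f f') :
    toSubPerm T h ∈ (S T c).Aut := by
  rw [mem_aut_iff]
  rintro ⟨v, hv⟩
  by_cases hvc : v = c
  · have e1 : (⟨v, hv⟩ : (S T c).V) = (S T c).root := Subtype.ext hvc
    have e2 : toSubPerm T h (S T c).root = (S T c).root := Subtype.ext h.1
    rw [e1, (S T c).parent_root, e2, (S T c).parent_root]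
  · have hfv : f v ≠ c := by
      intro heq
      apply hvc
      have := h.2.2.2.2.1 v hv
      rw [heq, h.2.1] at this
      exact this.symm
    apply Subtype.ext
    rw [S_parent_coe T c _ (by exact hfv), S_parent T c ⟨v, hv⟩ (by exact hvc)]
    exact h.2.2.2.2.2.2.1 v hv hvc

lemma toSubPerm_apply {c : T.V} {f f' : T.V → T.V} (h : PPair T c c f f') (x : (S T c).V) :
    (toSubPerm T h x).1 = f x.1 := rfl

end STAux
namespace STAux

variable (T : FRTree)
open FRTree

/-- Same orbit under the full automorphism group. -/
def SOrb (u v : T.V) : Prop := ∃ h ∈ T.Aut, h u = v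

lemma SOrb.refl (u : T.V) : SOrb T u u := ⟨1, one_mem _, rfl⟩

lemma SOrb.symm {u v : T.V} (h : SOrb T u v) : SOrb T v u := by
  obtain ⟨g, hg, hgu⟩ := h
  exact ⟨g⁻¹, inv_mem hg, by rw [← hgu]; simp⟩

lemma SOrb_root {v : T.V} : SOrb T T.root v ↔ v = T.root := by
  constructor
  · rintro ⟨g, hg, rfl⟩; exact aut_root T hg
  · rintro rfl; exact SOrb.refl T _

/-- Extension of a partial iso between two first-level subtrees to a global
automorphism. -/
lemma pairExt {c d : T.V} (hc : T.FirstLevel c) (hd : T.FirstLevel d)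
    {f f' : T.V → T.V} (hp : PPair T c d f f') :
    ∃ H : Equiv.Perm T.V, H ∈ T.Aut ∧ ∀ v ∈ T.Desc c, H v = f v := by
  classical
  obtain ⟨h1, h2, h3, h4, h5, h6, h7, h8⟩ := hp
  set F : T.V → T.V := fun v => if v ∈ T.Desc c then f v else if v ∈ T.Desc d then f' v else v with hF
  set G : T.V → T.V := fun v => if v ∈ T.Desc d then f' v else if v ∈ T.Desc c then f v else v with hG
  have hF1 : ∀ v, v ∈ T.Desc c → F v = f v := by
    intro v h; simp only [hF]; rw [if_pos h]
  have hF2 : ∀ v, v ∉ T.Desc c → v ∈ T.Desc d → F v = f' v := by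
    intro v h h'; simp only [hF]; rw [if_neg h, if_pos h']
  have hF3 : ∀ v, v ∉ T.Desc c → v ∉ T.Desc d → F v = v := by
    intro v h h'; simp only [hF]; rw [if_neg h, if_neg h']
  have hG1 : ∀ v, v ∈ T.Desc d → G v = f' v := by
    intro v h; simp only [hG]; rw [if_pos h]
  have hG2 : ∀ v, v ∉ T.Desc d → v ∈ T.Desc c → G v = f v := by
    intro v h h'; simp only [hG]; rw [if_neg h, if_pos h']
  have hG3 : ∀ v, v ∉ T.Desc d → v ∉ T.Desc c → G v = v := by
    intro v h h'; simp only [hG]; rw [if_neg h, if_neg h']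
  have hGF : ∀ v, G (F v) = v := by
    intro v
    by_cases h : v ∈ T.Desc c
    · rw [hF1 v h, hG1 _ (h3 v h)]
      exact h5 v h
    · by_cases h' : v ∈ T.Desc d
      · have hfv := h4 v h'
        have hnd : f' v ∉ T.Desc d := by
          intro hmem
          exact h (by rw [desc_disjoint T hc hd hfv hmem]; exact h')
        rw [hF2 v h h', hG2 _ hnd hfv]
        exact h6 v h'
      · rw [hF3 v h h', hG3 v h' h]
  have hFG : ∀ v, F (G v) = v := by
    intro v
    by_cases h : v ∈ T.Desc d
    · rw [hG1 v h, hF1 _ (h4 v h)]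
      exact h6 v h
    · by_cases h' : v ∈ T.Desc c
      · have hfv := h3 v h'
        have hnc : f v ∉ T.Desc c := by
          intro hmem
          exact h (by rw [desc_disjoint T hd hc hfv hmem]; exact h')
        rw [hG2 v h h', hF2 _ hnc hfv]
        exact h5 v h'
      · rw [hG3 v h h', hF3 v h' h]
  have hrootc := root_not_mem_desc T hc
  have hrootd := root_not_mem_desc T hd
  have hFroot : F T.root = T.root := hF3 _ hrootc hrootd
  have hcomm : ∀ v, T.parent (F v) = F (T.parent v) := by
    intro v
    by_cases h : v ∈ T.Desc c
    · by_cases hvc : v = c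
      · subst hvc
        rw [hF1 v h, h1, hd.2, hc.2, hFroot]
      · have hpv := parent_mem_desc T h hvc
        rw [hF1 v h, hF1 _ hpv]
        exact h7 v h hvc
    · by_cases h' : v ∈ T.Desc d
      · by_cases hvd : v = d
        · subst hvd
          rw [hF2 v h h', h2, hc.2, hd.2, hFroot]
        · have hpv := parent_mem_desc T h' hvd
          have hpvc : T.parent v ∉ T.Desc c := by
            intro hmem
            exact h (desc_disjoint T hd hc hpv hmem ▸ h')
          rw [hF2 v h h', hF2 _ hpvc hpv]
          exact h8 v h' hvd
      · rw [hF3 v h h']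
        by_cases hvr : v = T.root
        · subst hvr; rw [T.parent_root, hFroot]
        · by_cases hpr : T.parent v = T.root
          · rw [hpr, hFroot]
          · have h1a : anc T v ≠ c := fun hh => h ((mem_desc_iff_anc T hc).2 ⟨hvr, hh⟩)
            have h2a : anc T v ≠ d := fun hh => h' ((mem_desc_iff_anc T hd).2 ⟨hvr, hh⟩)
            have hpc : T.parent v ∉ T.Desc c := by
              intro hmem
              exact h1a (by rw [← anc_parent T hvr hpr]; exact anc_unique T hc hmem)
            have hpd : T.parent v ∉ T.Desc d := by
              intro hmem
              exact h2a (by rw [← anc_parent T hvr hpr]; exact anc_unique T hd hmem)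
            rw [hF3 _ hpc hpd]
  refine ⟨⟨F, G, hGF, hFG⟩, (mem_aut_iff T _).2 hcomm, fun v hv => ?_⟩
  exact hF1 v hv

/-- gluing automorphisms block by block. -/
lemma glue (t : T.V → T.V) (htroot : t T.root = T.root)
    (H : ∀ c, T.FirstLevel c → ∃ h : Equiv.Perm T.V, h ∈ T.Aut ∧ ∀ v ∈ T.Desc c, t v = h v)
    (hinj : ∀ c d, T.FirstLevel c → T.FirstLevel d → t c = t d → c = d) :
    ∃ g : Equiv.Perm T.V, g ∈ T.Aut ∧ ⇑g = t := by
  classical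
  choose hfun hmem hagree using H
  have hblock : ∀ c (hc : T.FirstLevel c), ∀ v ∈ T.Desc c, t v ∈ T.Desc (t c) := by
    intro c hc v hv
    rw [hagree c hc v hv, hagree c hc c (self_mem_desc T c)]
    exact (aut_mem_desc T (hmem c hc)).1 hv
  have htfl : ∀ c, T.FirstLevel c → T.FirstLevel (t c) := by
    intro c hc
    rw [hagree c hc c (self_mem_desc T c)]
    exact aut_firstLevel T (hmem c hc) hc
  have htinj : Function.Injective t := by
    intro v w hvw
    by_cases hv : v = T.root
    · subst hv
      by_cases hw : w = T.root
      · exact hw.symm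
      · exfalso
        obtain ⟨hwfl, hwm⟩ := anc_spec T hw
        have := hblock _ hwfl w hwm
        rw [← hvw, htroot] at this
        exact root_not_mem_desc T (htfl _ hwfl) this
    · by_cases hw : w = T.root
      · exfalso
        obtain ⟨hvfl, hvm⟩ := anc_spec T hv
        have := hblock _ hvfl v hvm
        rw [hvw, hw, htroot] at this
        exact root_not_mem_desc T (htfl _ hvfl) this
      · obtain ⟨hvfl, hvm⟩ := anc_spec T hv
        obtain ⟨hwfl, hwm⟩ := anc_spec T hw
        have h1 := hblock _ hvfl v hvm
        have h2 := hblock _ hwfl w hwm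
        rw [hvw] at h1
        have hanc : t (anc T v) = t (anc T w) :=
          desc_disjoint T (htfl _ hvfl) (htfl _ hwfl) h1 h2
        have hanceq : anc T v = anc T w := hinj _ _ hvfl hwfl hanc
        rw [hagree _ hvfl v hvm, hagree _ hvfl w (by rw [hanceq]; exact hwm)] at hvw
        exact (hfun (anc T v) hvfl).injective hvw
  have htbij : Function.Bijective t := (Finite.injective_iff_bijective).1 htinj
  refine ⟨Equiv.ofBijective t htbij, (mem_aut_iff T _).2 ?_, rfl⟩
  intro v
  show T.parent (t v) = t (T.parent v)
  by_cases hv : v = T.root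
  · subst hv; rw [htroot, T.parent_root, htroot]
  · obtain ⟨hfl, hm⟩ := anc_spec T hv
    by_cases hvc : v = anc T v
    · rw [hagree _ hfl v hm, (mem_aut_iff T _).1 (hmem _ hfl) v]
      have hpv : T.parent v = T.root := by rw [hvc]; exact hfl.2
      rw [hpv, aut_root T (hmem _ hfl), htroot]
    · rw [hagree _ hfl v hm, (mem_aut_iff T _).1 (hmem _ hfl) v,
        hagree _ hfl (T.parent v) (parent_mem_desc T hm hvc)]

/-- orbit characterization: two non-root vertices are in the same `Aut`-orbit iff
there is a partial iso between their first-level subtrees matching them. -/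
lemma orbit_char {c d u v : T.V} (hc : T.FirstLevel c) (hd : T.FirstLevel d)
    (hu : u ∈ T.Desc c) (hv : v ∈ T.Desc d) :
    SOrb T u v ↔ ∃ f f', PPair T c d f f' ∧ f u = v := by
  constructor
  · rintro ⟨g, hg, rfl⟩
    have hgc : g c = d := by
      have h1 : g u ∈ T.Desc (g c) := (aut_mem_desc T hg).1 hu
      exact desc_disjoint T (aut_firstLevel T hg hc) hd h1 hv
    exact ⟨⇑g, ⇑g⁻¹, hgc ▸ PPair.ofAut T hg c, rfl⟩
  · rintro ⟨f, f', hp, hfu⟩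
    obtain ⟨H, hH, hHagree⟩ := pairExt T hc hd hp
    exact ⟨H, hH, by rw [hHagree u hu, hfu]⟩

end STAux
set_option linter.unusedSectionVars false

namespace STAux

open Function

section PermPeriod

variable {α : Type*} [Fintype α] [DecidableEq α]

lemma perm_isPeriodic (g : Equiv.Perm α) (c : α) :
    Function.IsPeriodicPt ⇑g (orderOf g) c := by
  show (⇑g)^[orderOf g] c = c
  rw [← Equiv.Perm.coe_pow, pow_orderOf_eq_one]
  rfl

/-- minimal period of a point under a permutation. -/
noncomputable def per (g : Equiv.Perm α) (c : α) : ℕ := Function.minimalPeriod ⇑g c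

lemma per_pos (g : Equiv.Perm α) (c : α) : 0 < per g c :=
  (perm_isPeriodic g c).minimalPeriod_pos (orderOf_pos g)

lemma pow_per (g : Equiv.Perm α) (c : α) : (g ^ per g c) c = c := by
  rw [Equiv.Perm.coe_pow]
  exact Function.iterate_minimalPeriod

lemma pow_eq_self_iff (g : Equiv.Perm α) (c : α) (n : ℕ) :
    (g ^ n) c = c ↔ per g c ∣ n := by
  rw [Equiv.Perm.coe_pow]
  exact Function.isPeriodicPt_iff_minimalPeriod_dvd

lemma pow_mod_per (g : Equiv.Perm α) (c : α) (n : ℕ) :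
    (g ^ n) c = (g ^ (n % per g c)) c := by
  have hq : (g ^ (per g c * (n / per g c))) c = c :=
    (pow_eq_self_iff g c _).2 ⟨_, rfl⟩
  conv_lhs => rw [← Nat.div_add_mod n (per g c), Nat.add_comm]
  rw [pow_add, Equiv.Perm.mul_apply, hq]

lemma pow_inj_of_lt_per (g : Equiv.Perm α) (c : α) {i j : ℕ}
    (hi : i < per g c) (hj : j < per g c) (h : (g ^ i) c = (g ^ j) c) : i = j := by
  wlog hij : i ≤ j generalizing i j
  · exact (this hj hi h.symm (by omega)).symm
  rcases Nat.eq_or_lt_of_le hij with heq | hlt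
  · exact heq
  have : (g ^ (j - i)) c = c := by
    have h2 : (g ^ i) ((g ^ (j - i)) c) = (g ^ i) c := by
      rw [← Equiv.Perm.mul_apply, ← pow_add, Nat.add_sub_cancel' hij, h]
    exact (g ^ i).injective h2
  have := (pow_eq_self_iff g c _).1 this
  have := Nat.le_of_dvd (by omega) this
  omega

lemma orbit_card (g : Equiv.Perm α) (c : α) :
    (Finset.univ.filter (fun v => ∃ n : ℕ, (g ^ n) c = v)).card = per g c := by
  classical
  have : (Finset.univ.filter (fun v => ∃ n : ℕ, (g ^ n) c = v)) =
      (Finset.range (per g c)).image (fun i => (g ^ i) c) := by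
    ext v
    simp only [Finset.mem_filter, Finset.mem_univ, true_and, Finset.mem_image,
      Finset.mem_range]
    constructor
    · rintro ⟨n, rfl⟩
      exact ⟨n % per g c, Nat.mod_lt n (per_pos g c), (pow_mod_per g c n).symm⟩
    · rintro ⟨i, _, rfl⟩
      exact ⟨i, rfl⟩
  rw [this, Finset.card_image_of_injOn, Finset.card_range]
  intro i hi j hj h
  exact pow_inj_of_lt_per g c (Finset.mem_range.1 hi) (Finset.mem_range.1 hj) h

end PermPeriod

end STAux
namespace STAux

variable (T : FRTree)
open FRTree

/-- Isomorphism relation between subtrees. -/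
def rel (c d : T.V) : Prop := ∃ f f' : T.V → T.V, PPair T c d f f'

lemma rel_refl (c : T.V) : rel T c c := ⟨id, id, PPair.id T c⟩

lemma rel_symm {c d : T.V} (h : rel T c d) : rel T d c := by
  obtain ⟨f, f', hp⟩ := h; exact ⟨f', f, hp.symm T⟩

lemma rel_trans {c d e : T.V} (h : rel T c d) (h' : rel T d e) : rel T c e := by
  obtain ⟨f, f', hp⟩ := h; obtain ⟨g, g', hq⟩ := h'
  exact ⟨_, _, hp.comp T hq⟩

/-- The list of first-level vertices with subtree isomorphic to that of `c`. -/
noncomputable def cls (c : T.V) : List T.V :=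
  (Finset.univ.filter (fun d => T.FirstLevel d ∧ rel T c d)).toList

lemma mem_cls {c d : T.V} : d ∈ cls T c ↔ T.FirstLevel d ∧ rel T c d := by
  simp [cls]

lemma cls_nodup (c : T.V) : (cls T c).Nodup := Finset.nodup_toList _

lemma self_mem_cls {c : T.V} (hc : T.FirstLevel c) : c ∈ cls T c :=
  (mem_cls T).2 ⟨hc, rel_refl T c⟩

lemma cls_eq {c d : T.V} (h : rel T c d) : cls T c = cls T d := by
  unfold cls
  congr 1
  apply Finset.filter_congr
  intro x _
  constructor
  · rintro ⟨h1, h2⟩; exact ⟨h1, rel_trans T (rel_symm T h) h2⟩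
  · rintro ⟨h1, h2⟩; exact ⟨h1, rel_trans T h h2⟩

lemma getD_zero_mem {β : Type*} (l : List β) (d : β) (h : l ≠ []) : l.getD 0 d ∈ l := by
  cases l with
  | nil => exact absurd rfl h
  | cons a t => exact List.mem_cons_self

/-- Representative of the class of `c`. -/
noncomputable def rep (c : T.V) : T.V := (cls T c).getD 0 T.root

lemma rep_mem_cls {c : T.V} (hc : T.FirstLevel c) : rep T c ∈ cls T c :=
  getD_zero_mem _ _ (List.ne_nil_of_mem (self_mem_cls T hc))

lemma rep_firstLevel {c : T.V} (hc : T.FirstLevel c) : T.FirstLevel (rep T c) :=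
  ((mem_cls T).1 (rep_mem_cls T hc)).1

lemma rel_rep {c : T.V} (hc : T.FirstLevel c) : rel T c (rep T c) :=
  ((mem_cls T).1 (rep_mem_cls T hc)).2

lemma cls_eq_of_mem {c d : T.V} (h : d ∈ cls T c) : cls T d = cls T c :=
  (cls_eq T ((mem_cls T).1 h).2).symm

lemma rep_eq_of_mem {c d : T.V} (h : d ∈ cls T c) : rep T d = rep T c := by
  unfold rep; rw [cls_eq_of_mem T h]

/-- chosen isomorphism pair from the representative's subtree to `c`'s subtree. -/
noncomputable def tauP (c : T.V) : (T.V → T.V) × (T.V → T.V) :=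
  if h : ∃ p : (T.V → T.V) × (T.V → T.V), PPair T (rep T c) c p.1 p.2 then h.choose
  else (id, id)

noncomputable def tau (c : T.V) : T.V → T.V := (tauP T c).1
noncomputable def taui (c : T.V) : T.V → T.V := (tauP T c).2

lemma tau_spec {c : T.V} (hc : T.FirstLevel c) : PPair T (rep T c) c (tau T c) (taui T c) := by
  obtain ⟨f, f', hp⟩ := rel_symm T (rel_rep T hc)
  have hex : ∃ p : (T.V → T.V) × (T.V → T.V), PPair T (rep T c) c p.1 p.2 := ⟨(f, f'), hp⟩
  unfold tau taui tauP
  rw [dif_pos hex]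
  exact hex.choose_spec

/-- index of `c` within its class. -/
noncomputable def idx (c : T.V) : ℕ := (cls T c).idxOf c

lemma idx_lt {c : T.V} (hc : T.FirstLevel c) : idx T c < (cls T c).length :=
  List.idxOf_lt_length_iff.2 (self_mem_cls T hc)

lemma get_idx {c : T.V} (hc : T.FirstLevel c) :
    (cls T c).get ⟨idx T c, idx_lt T hc⟩ = c := List.idxOf_get _

lemma idx_get {c : T.V} (i : Fin (cls T c).length) :
    idx T ((cls T c).get i) = i.1 := by
  have hmem : (cls T c).get i ∈ cls T c := List.get_mem _ _
  unfold idx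
  rw [cls_eq_of_mem T hmem]
  exact List.get_idxOf (cls_nodup T c) i

/-- next element in the cyclic ordering of the class. -/
noncomputable def nxt (c : T.V) : T.V :=
  (cls T c).getD ((idx T c + 1) % (cls T c).length) T.root

lemma nxt_eq_get {c : T.V} (hc : T.FirstLevel c) :
    nxt T c = (cls T c).get ⟨(idx T c + 1) % (cls T c).length,
      Nat.mod_lt _ (by have := idx_lt T hc; omega)⟩ := by
  unfold nxt
  exact List.getD_eq_get _ _ ⟨_, _⟩

lemma nxt_mem_cls {c : T.V} (hc : T.FirstLevel c) : nxt T c ∈ cls T c := by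
  rw [nxt_eq_get T hc]; exact List.get_mem _ _

lemma idx_nxt {c : T.V} (hc : T.FirstLevel c) :
    idx T (nxt T c) = (idx T c + 1) % (cls T c).length := by
  rw [nxt_eq_get T hc]
  have := idx_get T (c := c) ⟨(idx T c + 1) % (cls T c).length,
    Nat.mod_lt _ (by have := idx_lt T hc; omega)⟩
  -- idx is computed in the class of the gotten element, but classes agree
  exact this

/-- `i`-th element of the class list. -/
noncomputable def elem (c : T.V) (i : ℕ) : T.V := (cls T c).getD i T.root

lemma elem_eq_get {c : T.V} {i : ℕ} (h : i < (cls T c).length) :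
    elem T c i = (cls T c).get ⟨i, h⟩ := List.getD_eq_get _ _ ⟨_, _⟩

lemma elem_mem {c : T.V} {i : ℕ} (h : i < (cls T c).length) :
    elem T c i ∈ cls T c := by
  rw [elem_eq_get T h]; exact List.get_mem _ _

lemma idx_elem {c : T.V} {i : ℕ} (h : i < (cls T c).length) :
    idx T (elem T c i) = i := by
  rw [elem_eq_get T h]; exact idx_get T _

lemma elem_idx {c : T.V} (hc : T.FirstLevel c) : elem T c (idx T c) = c := by
  rw [elem_eq_get T (idx_lt T hc)]; exact get_idx T hc

lemma elem_congr {c d : T.V} (h : d ∈ cls T c) (i : ℕ) : elem T d i = elem T c i := by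
  unfold elem; rw [cls_eq_of_mem T h]

lemma nxt_eq_elem {c : T.V} (hc : T.FirstLevel c) :
    nxt T c = elem T c ((idx T c + 1) % (cls T c).length) := by
  rw [nxt_eq_get T hc, elem_eq_get T]

lemma mod_succ_inj {m i j : ℕ} (hi : i < m) (hj : j < m)
    (h : (i + 1) % m = (j + 1) % m) : i = j := by
  by_cases h1 : i + 1 = m
  · by_cases h2 : j + 1 = m
    · omega
    · rw [h1, Nat.mod_self, Nat.mod_eq_of_lt (by omega)] at h; omega
  · by_cases h2 : j + 1 = m
    · rw [h2, Nat.mod_self, Nat.mod_eq_of_lt (by omega)] at h; omega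
    · rw [Nat.mod_eq_of_lt (by omega), Nat.mod_eq_of_lt (by omega)] at h; omega

end STAux
namespace STAux

open FRTree

lemma exists_part (T : FRTree)
    (IH : ∀ c : T.V, T.FirstLevel c → ∃ g ∈ (S T c).Aut,
      ∀ u v : (S T c).V, (∃ n : ℕ, (g ^ n) u = v) ↔ SOrb (S T c) u v) :
    ∃ g ∈ T.Aut, ∀ u v : T.V, (∃ n : ℕ, (g ^ n) u = v) ↔ SOrb T u v := by
  classical
  have IH' : ∀ c : T.V, ∃ g : Equiv.Perm (S T c).V, T.FirstLevel c →
      (g ∈ (S T c).Aut ∧ ∀ u v : (S T c).V, (∃ n : ℕ, (g ^ n) u = v) ↔ SOrb (S T c) u v) := by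
    intro c
    by_cases hc : T.FirstLevel c
    · obtain ⟨g, hg1, hg2⟩ := IH c hc
      exact ⟨g, fun _ => ⟨hg1, hg2⟩⟩
    · exact ⟨1, fun h => absurd h hc⟩
  choose a haut using IH'
  -- the exponent with which the model automorphism is applied
  set wrap : T.V → ℕ := fun c => if idx T c + 1 = (cls T c).length then 1 else 0 with hwrap
  set blockF : T.V → T.V → T.V := fun c v =>
    tau T (nxt T c) (lift T (rep T c) ⇑((a (rep T c)) ^ (wrap c)) (taui T c v)) with hblockF
  set gFun : T.V → T.V := fun v => if v = T.root then T.root else blockF (anc T v) v with hgFun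
  -- basic facts per first-level vertex
  have hfacts : ∀ c : T.V, T.FirstLevel c →
      ∃ q : T.V → T.V, PPair T c (nxt T c) (blockF c) q := by
    intro c hc
    have hr := rep_firstLevel T hc
    have hnm := nxt_mem_cls T hc
    have hnfl : T.FirstLevel (nxt T c) := ((mem_cls T).1 hnm).1
    have hrn : rep T (nxt T c) = rep T c := rep_eq_of_mem T hnm
    have q1 : PPair T c (rep T c) (taui T c) (tau T c) := (tau_spec T hc).symm T
    have q2 : PPair T (rep T c) (rep T c)
        (lift T (rep T c) ⇑((a (rep T c)) ^ (wrap c)))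
        (lift T (rep T c) ⇑((a (rep T c)) ^ (wrap c))⁻¹) :=
      PPair.ofSubAut T (pow_mem (haut (rep T c) hr).1 _)
    have q3 : PPair T (rep T c) (nxt T c) (tau T (nxt T c)) (taui T (nxt T c)) := by
      have := tau_spec T hnfl
      rwa [hrn] at this
    have := (q1.comp T q2).comp T q3
    exact ⟨_, this⟩
  have hgc : ∀ c : T.V, T.FirstLevel c → gFun c = nxt T c := by
    intro c hc
    have hr := rep_firstLevel T hc
    have hnm := nxt_mem_cls T hc
    have hnfl : T.FirstLevel (nxt T c) := ((mem_cls T).1 hnm).1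
    have hrn : rep T (nxt T c) = rep T c := rep_eq_of_mem T hnm
    have h1 : gFun c = blockF c c := by
      simp only [hgFun, if_neg hc.1]
      rw [anc_unique T hc (self_mem_desc T c)]
    rw [h1]
    have h2 : taui T c c = rep T c := (tau_spec T hc).2.1
    have h3 : lift T (rep T c) ⇑((a (rep T c)) ^ (wrap c)) (rep T c) = rep T c := by
      rw [lift_apply T _ _ (self_mem_desc T (rep T c))]
      have := aut_root (S T (rep T c)) (pow_mem (haut (rep T c) hr).1 (wrap c))
      rw [show (S T (rep T c)).root = ⟨rep T c, self_mem_desc T _⟩ from rfl] at this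
      rw [this]
    have h4 : tau T (nxt T c) (rep T c) = nxt T c := by
      have := (tau_spec T hnfl).1
      rwa [hrn] at this
    show tau T (nxt T c) (lift T (rep T c) ⇑((a (rep T c)) ^ (wrap c)) (taui T c c)) = nxt T c
    rw [h2, h3, h4]
  have hginj : ∀ c d : T.V, T.FirstLevel c → T.FirstLevel d → gFun c = gFun d → c = d := by
    intro c d hc hd h
    rw [hgc c hc, hgc d hd] at h
    have hnmc := nxt_mem_cls T hc
    have hnmd := nxt_mem_cls T hd
    have hcls : cls T c = cls T d := by
      rw [← cls_eq_of_mem T hnmc, h, cls_eq_of_mem T hnmd]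
    have hdc : d ∈ cls T c := by rw [hcls]; exact self_mem_cls T hd
    have hic := idx_lt T hc
    have hid := idx_lt T hd
    have hix : (idx T c + 1) % (cls T c).length = (idx T d + 1) % (cls T c).length := by
      have e1 := idx_nxt T hc
      have e2 := idx_nxt T hd
      rw [nxt_eq_elem T hc] at h
      rw [nxt_eq_elem T hd] at h
      have : elem T d ((idx T d + 1) % (cls T d).length) =
          elem T c ((idx T d + 1) % (cls T d).length) := elem_congr T hdc _
      rw [this, ← hcls] at h
      have hlt1 : (idx T c + 1) % (cls T c).length < (cls T c).length :=
        Nat.mod_lt _ (by omega)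
      have hlt2 : (idx T d + 1) % (cls T c).length < (cls T c).length :=
        Nat.mod_lt _ (by omega)
      have := congrArg (idx T) h
      rwa [idx_elem T hlt1, idx_elem T hlt2] at this
    have : idx T c = idx T d := mod_succ_inj (by omega) (by rw [hcls]; exact hid) hix
    rw [← elem_idx T hc, ← elem_idx T hd, this, ← elem_congr T hdc]
  obtain ⟨g, hgaut, hgeq⟩ := glue T gFun (by simp only [hgFun, if_pos rfl])
    (fun c hc => by
      obtain ⟨q, hq⟩ := hfacts c hc
      have hnfl : T.FirstLevel (nxt T c) := ((mem_cls T).1 (nxt_mem_cls T hc)).1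
      obtain ⟨H, hH, hHag⟩ := pairExt T hc hnfl hq
      refine ⟨H, hH, fun v hv => ?_⟩
      have hvr : v ≠ T.root := fun h => root_not_mem_desc T hc (h ▸ hv)
      have : anc T v = c := anc_unique T hc hv
      simp only [hgFun, if_neg hvr, this]
      exact (hHag v hv).symm)
    hginj
  -- iteration formula
  have hiter : ∀ (N : ℕ) (c : T.V), T.FirstLevel c → ∀ (k : ℕ),
      k < (cls T c).length → ∀ (x : (S T (rep T c)).V),
      gFun^[N] (tau T (elem T c k) x.1) =
        tau T (elem T c ((k + N) % (cls T c).length))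
          (((a (rep T c)) ^ ((k + N) / (cls T c).length)) x).1 := by
    intro N
    induction N with
    | zero =>
      intro c hc k hk x
      simp [Nat.mod_eq_of_lt hk, Nat.div_eq_of_lt hk]
    | succ N ihN =>
      intro c hc k hk x
      rw [Function.iterate_succ_apply', ihN c hc k hk x]
      set m := (cls T c).length with hm
      have hmpos : 0 < m := by omega
      set p := (k + N) % m with hp
      set qq := (k + N) / m with hq
      have hplt : p < m := Nat.mod_lt _ hmpos
      set d := elem T c p with hd
      have hdm : d ∈ cls T c := elem_mem T (by rw [← hm]; exact hplt)
      have hdfl : T.FirstLevel d := ((mem_cls T).1 hdm).1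
      have hrd : rep T d = rep T c := rep_eq_of_mem T hdm
      have hclsd : cls T d = cls T c := cls_eq_of_mem T hdm
      have hidxd : idx T d = p := by rw [hd]; exact idx_elem T (by rw [← hm]; exact hplt)
      have htaud : PPair T (rep T c) d (tau T d) (taui T d) := by
        have := tau_spec T hdfl; rwa [hrd] at this
      have hmemy : ((a (rep T c) ^ qq) x).1 ∈ T.Desc (rep T c) := ((a (rep T c) ^ qq) x).2
      have hu : tau T d ((a (rep T c) ^ qq) x).1 ∈ T.Desc d := htaud.2.2.1 _ hmemy
      have hur : tau T d ((a (rep T c) ^ qq) x).1 ≠ T.root :=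
        fun h => root_not_mem_desc T hdfl (h ▸ hu)
      have hanc : anc T (tau T d ((a (rep T c) ^ qq) x).1) = d := anc_unique T hdfl hu
      have step1 : gFun (tau T d ((a (rep T c) ^ qq) x).1) =
          blockF (anc T (tau T d ((a (rep T c) ^ qq) x).1)) (tau T d ((a (rep T c) ^ qq) x).1) := by
        simp only [hgFun]
        rw [if_neg hur]
      rw [step1, hanc]
      have step2 : blockF d (tau T d ((a (rep T c) ^ qq) x).1) =
          tau T (nxt T d) (lift T (rep T c) ⇑((a (rep T c)) ^ (wrap d))
            (taui T d (tau T d ((a (rep T c) ^ qq) x).1))) := by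
        simp only [hblockF]
        rw [hrd]
      rw [step2, htaud.2.2.2.2.1 _ hmemy, lift_coe, ← Equiv.Perm.mul_apply, ← pow_add]
      have hnxtd : nxt T d = elem T c ((p + 1) % m) := by
        rw [nxt_eq_elem T hdfl, hidxd, hclsd, ← hm, elem_congr T hdm]
      rw [hnxtd]
      have hwd : wrap d = if p + 1 = m then 1 else 0 := by
        simp only [hwrap]
        rw [hidxd, hclsd, ← hm]
      have hdm1 : m * qq + p = k + N := by rw [hp, hq]; exact Nat.div_add_mod _ _
      have e1 : (k + (N + 1)) % m = (p + 1) % m := by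
        rw [show k + (N + 1) = m * qq + (p + 1) from by omega, Nat.mul_add_mod]
      have e2 : (k + (N + 1)) / m = wrap d + qq := by
        by_cases hcase : p + 1 = m
        · rw [show k + (N + 1) = m * qq + m from by omega, ← Nat.mul_succ,
            Nat.mul_div_cancel_left _ hmpos, hwd, if_pos hcase]
          omega
        · rw [show k + (N + 1) = m * qq + (p + 1) from by omega,
            Nat.mul_add_div hmpos, Nat.div_eq_of_lt (by omega), hwd, if_neg hcase]
          omega
      rw [e1, e2]
  -- conclusion
  refine ⟨g, hgaut, fun u v => ⟨?_, ?_⟩⟩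
  · rintro ⟨n, rfl⟩
    exact ⟨g ^ n, pow_mem hgaut n, rfl⟩
  · intro hso
    by_cases hu : u = T.root
    · subst hu
      have hv : v = T.root := (SOrb_root T).1 hso
      exact ⟨0, by rw [hv]; rfl⟩
    · have hv : v ≠ T.root := by
        intro hvr
        exact hu ((SOrb_root T).1 (SOrb.symm T (hvr ▸ hso)))
      obtain ⟨hcfl, hcu⟩ := anc_spec T hu
      obtain ⟨hdfl, hdv⟩ := anc_spec T hv
      set c := anc T u with hc
      set d := anc T v with hdd
      obtain ⟨f, f', hp, hfu⟩ := (orbit_char T hcfl hdfl hcu hdv).1 hso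
      have hdm : d ∈ cls T c := (mem_cls T).2 ⟨hdfl, ⟨f, f', hp⟩⟩
      have hrd : rep T d = rep T c := rep_eq_of_mem T hdm
      have hrfl : T.FirstLevel (rep T c) := rep_firstLevel T hcfl
      set m := (cls T c).length with hm
      have hk : idx T c < m := idx_lt T hcfl
      have hl : idx T d < m := by
        have := idx_lt T hdfl
        rwa [cls_eq_of_mem T hdm, ← hm] at this
      have htauc : PPair T (rep T c) c (tau T c) (taui T c) := tau_spec T hcfl
      have htaud : PPair T (rep T c) d (tau T d) (taui T d) := by
        have := tau_spec T hdfl; rwa [hrd] at this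
      have hxmem : taui T c u ∈ T.Desc (rep T c) := htauc.2.2.2.1 u hcu
      have hymem : taui T d v ∈ T.Desc (rep T c) := htaud.2.2.2.1 v hdv
      have hxu : tau T c (taui T c u) = u := htauc.2.2.2.2.2.1 u hcu
      have hyv : tau T d (taui T d v) = v := htaud.2.2.2.2.2.1 v hdv
      have hbig := (htauc.comp T hp).comp T (htaud.symm T)
      have hπ : toSubPerm T hbig ⟨taui T c u, hxmem⟩ = ⟨taui T d v, hymem⟩ := by
        apply Subtype.ext
        rw [toSubPerm_apply T hbig ⟨taui T c u, hxmem⟩]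
        show taui T d (f (tau T c (taui T c u))) = taui T d v
        rw [hxu, hfu]
      obtain ⟨e, he⟩ := ((haut (rep T c) hrfl).2 ⟨taui T c u, hxmem⟩ ⟨taui T d v, hymem⟩).2
        ⟨toSubPerm T hbig, toSubPerm_mem T hbig, hπ⟩
      have hop := orderOf_pos (a (rep T c))
      have haE : (a (rep T c)) ^ (e + orderOf (a (rep T c))) = (a (rep T c)) ^ e := by
        rw [pow_add, pow_orderOf_eq_one, mul_one]
      set E := e + orderOf (a (rep T c)) with hE
      have hE1 : 1 ≤ E := by omega
      have hmE : m ≤ m * E := Nat.le_mul_of_pos_right m (by omega)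
      set N := m * E + idx T d - idx T c with hN
      have hkN : idx T c + N = m * E + idx T d := by omega
      have key := hiter N c hcfl (idx T c) (by rw [← hm]; exact hk) ⟨taui T c u, hxmem⟩
      rw [elem_idx T hcfl] at key
      have hxco : (⟨taui T c u, hxmem⟩ : (S T (rep T c)).V).1 = taui T c u := rfl
      rw [hxco, hxu, ← hm, hkN] at key
      have e1 : (m * E + idx T d) % m = idx T d := by
        rw [Nat.mul_add_mod, Nat.mod_eq_of_lt hl]
      have e2 : (m * E + idx T d) / m = E := by
        rw [Nat.mul_add_div (by omega), Nat.div_eq_of_lt hl, Nat.add_zero]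
      rw [e1, e2, haE, he] at key
      have helemd : elem T c (idx T d) = d := by
        rw [← elem_congr T hdm, elem_idx T hdfl]
      rw [helemd] at key
      have hyco : (⟨taui T d v, hymem⟩ : (S T (rep T c)).V).1 = taui T d v := rfl
      rw [hyco, hyv] at key
      refine ⟨N, ?_⟩
      rw [← hgeq, ← Equiv.Perm.coe_pow] at key
      exact key

end STAux
namespace STAux

open FRTree

lemma rep_idem (T : FRTree) {c : T.V} (hc : T.FirstLevel c) :
    rep T (rep T c) = rep T c := rep_eq_of_mem T (rep_mem_cls T hc)

lemma sorb_mem_cls (T : FRTree) {c d : T.V} (hc : T.FirstLevel c) (hd : T.FirstLevel d)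
    (h : SOrb T c d) : d ∈ cls T c := by
  obtain ⟨f, f', hp, -⟩ := (orbit_char T hc hd (self_mem_desc T c) (self_mem_desc T d)).1 h
  exact (mem_cls T).2 ⟨hd, ⟨f, f', hp⟩⟩

lemma conj_part (T : FRTree)
    (IH : ∀ c : T.V, T.FirstLevel c → ∀ b ∈ (S T c).Aut, ∀ b' ∈ (S T c).Aut,
      (∀ u v : (S T c).V, (∃ n : ℕ, (b ^ n) u = v) ↔ SOrb (S T c) u v) →
      (∀ u v : (S T c).V, (∃ n : ℕ, (b' ^ n) u = v) ↔ SOrb (S T c) u v) →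
      ∃ t ∈ (S T c).Aut, t * b * t⁻¹ = b')
    (g : Equiv.Perm T.V) (hg : g ∈ T.Aut) (g' : Equiv.Perm T.V) (hg' : g' ∈ T.Aut)
    (hpg : ∀ u v : T.V, (∃ n : ℕ, (g ^ n) u = v) ↔ SOrb T u v)
    (hpg' : ∀ u v : T.V, (∃ n : ℕ, (g' ^ n) u = v) ↔ SOrb T u v) :
    ∃ t ∈ T.Aut, t * g * t⁻¹ = g' := by
  classical
  -- the minimal periods of `g` and `g'` agree everywhere
  have hper : ∀ v : T.V, per g v = per g' v := by
    intro v
    rw [← orbit_card g v, ← orbit_card g' v]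
    congr 1
    ext w
    simp only [Finset.mem_filter, Finset.mem_univ, true_and]
    rw [hpg v w, hpg' v w]
  -- the restriction of `h ^ per` to a first-level subtree, with its properties
  have block : ∀ r : T.V, T.FirstLevel r → ∀ (h : Equiv.Perm T.V), h ∈ T.Aut →
      (∀ u v : T.V, (∃ n : ℕ, (h ^ n) u = v) ↔ SOrb T u v) →
      ∃ B : Equiv.Perm (S T r).V, B ∈ (S T r).Aut ∧
        (∀ x : (S T r).V, (B x).1 = (h ^ per h r) x.1) ∧
        (∀ u v : (S T r).V, (∃ n : ℕ, (B ^ n) u = v) ↔ SOrb (S T r) u v) := by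
    intro r hr h hh hph
    have hpp : PPair T r r ⇑(h ^ per h r) ⇑(h ^ per h r)⁻¹ := by
      have := PPair.ofAut T (pow_mem hh (per h r)) r
      rwa [pow_per h r] at this
    refine ⟨toSubPerm T hpp, toSubPerm_mem T hpp, fun x => toSubPerm_apply T hpp x, ?_⟩
    have hBpow : ∀ (q : ℕ) (x : (S T r).V),
        ((toSubPerm T hpp ^ q) x).1 = (h ^ (per h r * q)) x.1 := by
      intro q
      induction q with
      | zero => intro x; simp
      | succ q ih =>
        intro x
        rw [pow_succ, Equiv.Perm.mul_apply, ih, toSubPerm_apply, Nat.mul_succ,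
          pow_add, Equiv.Perm.mul_apply]
    intro u v
    constructor
    · rintro ⟨q, rfl⟩
      exact ⟨toSubPerm T hpp ^ q, pow_mem (toSubPerm_mem T hpp) q, rfl⟩
    · rintro ⟨σ, hσ, hσu⟩
      have hlp : PPair T r r (lift T r ⇑σ) (lift T r ⇑σ⁻¹) := PPair.ofSubAut T hσ
      obtain ⟨H, hH, hHag⟩ := pairExt T hr hr hlp
      have hso : SOrb T u.1 v.1 := by
        refine ⟨H, hH, ?_⟩
        rw [hHag u.1 u.2, lift_coe, hσu]
      obtain ⟨n, hn⟩ := (hph u.1 v.1).2 hso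
      have hfix : (h ^ n) r = r := by
        have h1 : (h ^ n) u.1 ∈ T.Desc ((h ^ n) r) := (aut_mem_desc T (pow_mem hh n)).1 u.2
        rw [hn] at h1
        exact desc_disjoint T (aut_firstLevel T (pow_mem hh n) hr) hr h1 v.2
      have hdvd : per h r ∣ n := (pow_eq_self_iff h r n).1 hfix
      refine ⟨n / per h r, Subtype.ext ?_⟩
      rw [hBpow, Nat.mul_div_cancel' hdvd, hn]
  -- conjugating automorphisms of the first-level subtrees, packaged with choice
  have ht0ex : ∀ r : T.V, ∃ τ : Equiv.Perm (S T r).V, T.FirstLevel r →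
      (τ ∈ (S T r).Aut ∧ ∀ w ∈ T.Desc r,
        lift T r ⇑τ ((g ^ per g r) w) = (g' ^ per g r) (lift T r ⇑τ w)) := by
    intro r
    by_cases hr : T.FirstLevel r
    · obtain ⟨B, hBmem, hBco, hBprop⟩ := block r hr g hg hpg
      obtain ⟨B', hB'mem, hB'co, hB'prop⟩ := block r hr g' hg' hpg'
      obtain ⟨τ, hτmem, hτconj⟩ := IH r hr B hBmem B' hB'mem hBprop hB'prop
      refine ⟨τ, fun _ => ⟨hτmem, fun w hw => ?_⟩⟩
      have hcomm : τ * B = B' * τ := by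
        have := congrArg (· * τ) hτconj
        simpa [mul_assoc] using this
      have happ := congrArg (fun σ : Equiv.Perm (S T r).V => (σ ⟨w, hw⟩).1) hcomm
      change (τ (B ⟨w, hw⟩)).1 = (B' (τ ⟨w, hw⟩)).1 at happ
      have e1 : (τ (B ⟨w, hw⟩)).1 = lift T r ⇑τ ((g ^ per g r) w) := by
        have hBw : (B ⟨w, hw⟩).1 = (g ^ per g r) w := hBco ⟨w, hw⟩
        rw [← lift_coe T r ⇑τ (B ⟨w, hw⟩), hBw]
      have e2 : (B' (τ ⟨w, hw⟩)).1 = (g' ^ per g r) (lift T r ⇑τ w) := by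
        rw [hB'co (τ ⟨w, hw⟩), ← lift_coe T r ⇑τ ⟨w, hw⟩, hper r]
      rw [e1, e2] at happ
      exact happ
    · exact ⟨1, fun h => absurd h hr⟩
  choose t0 ht0 using ht0ex
  -- position of a first-level vertex in the `g`-cycle of its class
  set jj : T.V → ℕ := fun d => sInf {n : ℕ | (g ^ n) (rep T d) = d} with hjjdef
  have hjjex : ∀ d : T.V, T.FirstLevel d → {n : ℕ | (g ^ n) (rep T d) = d}.Nonempty := by
    intro d hd
    have hrfl := rep_firstLevel T hd
    have hppr : PPair T (rep T d) d (tau T d) (taui T d) := tau_spec T hd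
    obtain ⟨H, hH, hHag⟩ := pairExt T hrfl hd hppr
    have hso : SOrb T (rep T d) d := by
      refine ⟨H, hH, ?_⟩
      rw [hHag _ (self_mem_desc T _), hppr.1]
    obtain ⟨n, hn⟩ := (hpg _ _).2 hso
    exact ⟨n, hn⟩
  have hjjspec : ∀ d : T.V, T.FirstLevel d → (g ^ jj d) (rep T d) = d := by
    intro d hd
    exact Nat.sInf_mem (hjjex d hd)
  have hjjlt : ∀ d : T.V, T.FirstLevel d → jj d < per g (rep T d) := by
    intro d hd
    obtain ⟨n, hn⟩ := hjjex d hd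
    have h2 : (g ^ (n % per g (rep T d))) (rep T d) = d := by
      rw [← pow_mod_per]
      exact hn
    calc jj d ≤ n % per g (rep T d) := Nat.sInf_le h2
      _ < per g (rep T d) := Nat.mod_lt _ (per_pos g _)
  have hjjrep : ∀ r : T.V, rep T r = r → jj r = 0 := by
    intro r hrr
    apply Nat.eq_zero_of_le_zero
    apply Nat.sInf_le
    show (g ^ 0) (rep T r) = r
    rw [pow_zero]
    exact hrr
  -- the conjugating map
  set L : T.V → T.V → T.V := fun r => lift T r ⇑(t0 r) with hL
  set tFun : T.V → T.V := fun v => if v = T.root then T.root else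
    (g' ^ (jj (anc T v))) (L (rep T (anc T v)) (((g ^ (jj (anc T v)))⁻¹) v)) with htFun
  have htval : ∀ c : T.V, T.FirstLevel c → ∀ v ∈ T.Desc c,
      tFun v = (g' ^ jj c) (L (rep T c) (((g ^ jj c)⁻¹) v)) := by
    intro c hc v hv
    have hvr : v ≠ T.root := fun h => root_not_mem_desc T hc (h ▸ hv)
    have hanc : anc T v = c := anc_unique T hc hv
    simp only [htFun]
    rw [if_neg hvr, hanc]
  have hginvc : ∀ c : T.V, T.FirstLevel c → ((g ^ jj c)⁻¹) c = rep T c := by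
    intro c hc
    apply (g ^ jj c).injective
    rw [Equiv.Perm.apply_inv_self, hjjspec c hc]
  have htc : ∀ c : T.V, T.FirstLevel c → tFun c = (g' ^ jj c) (rep T c) := by
    intro c hc
    rw [htval c hc c (self_mem_desc T c), hginvc c hc]
    congr 1
    have hrfl := rep_firstLevel T hc
    simp only [hL]
    rw [lift_apply T _ _ (self_mem_desc T (rep T c))]
    have := aut_root (S T (rep T c)) ((ht0 (rep T c) hrfl).1)
    rw [show (S T (rep T c)).root = ⟨rep T c, self_mem_desc T _⟩ from rfl] at this
    rw [this]
  -- injectivity of tFun on first-level vertices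
  have htinj : ∀ c d : T.V, T.FirstLevel c → T.FirstLevel d → tFun c = tFun d → c = d := by
    intro c d hc hd h
    rw [htc c hc, htc d hd] at h
    have hfl1 : T.FirstLevel ((g' ^ jj c) (rep T c)) :=
      aut_firstLevel T (pow_mem hg' _) (rep_firstLevel T hc)
    have hrepc : rep T ((g' ^ jj c) (rep T c)) = rep T c := by
      have hmem := sorb_mem_cls T (rep_firstLevel T hc) hfl1
        ⟨g' ^ jj c, pow_mem hg' _, rfl⟩
      rw [rep_eq_of_mem T hmem, rep_idem T hc]
    have hfl2 : T.FirstLevel ((g' ^ jj d) (rep T d)) :=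
      aut_firstLevel T (pow_mem hg' _) (rep_firstLevel T hd)
    have hrepd : rep T ((g' ^ jj d) (rep T d)) = rep T d := by
      have hmem := sorb_mem_cls T (rep_firstLevel T hd) hfl2
        ⟨g' ^ jj d, pow_mem hg' _, rfl⟩
      rw [rep_eq_of_mem T hmem, rep_idem T hd]
    have hrr : rep T c = rep T d := by
      rw [← hrepc, ← hrepd, h]
    have hjc : jj c < per g' (rep T c) := by
      rw [← hper]
      exact hjjlt c hc
    have hjd : jj d < per g' (rep T c) := by
      rw [hrr, ← hper]
      exact hjjlt d hd
    have heq : jj c = jj d := by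
      apply pow_inj_of_lt_per g' (rep T c) hjc hjd
      rw [h, hrr]
    rw [← hjjspec c hc, ← hjjspec d hd, heq, hrr]
  -- glue into an automorphism
  obtain ⟨t, htaut, hteq⟩ := glue T tFun (by simp only [htFun, if_pos rfl])
    (fun c hc => by
      have hrfl := rep_firstLevel T hc
      have hlp : PPair T (rep T c) (rep T c) (lift T (rep T c) ⇑(t0 (rep T c)))
          (lift T (rep T c) ⇑(t0 (rep T c))⁻¹) := PPair.ofSubAut T ((ht0 (rep T c) hrfl).1)
      obtain ⟨H, hH, hHag⟩ := pairExt T hrfl hrfl hlp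
      refine ⟨(g' ^ jj c) * H * (g ^ jj c)⁻¹, mul_mem (mul_mem (pow_mem hg' _) hH)
        (inv_mem (pow_mem hg _)), fun v hv => ?_⟩
      rw [htval c hc v hv]
      simp only [Equiv.Perm.mul_apply]
      congr 1
      have hmem : ((g ^ jj c)⁻¹) v ∈ T.Desc (rep T c) := by
        have h1 := (aut_mem_desc T (inv_mem (pow_mem hg (jj c)))).1 hv
        rwa [hginvc c hc] at h1
      rw [hHag _ hmem])
    htinj
  refine ⟨t, htaut, ?_⟩
  -- verify the conjugation relation pointwise
  have hpoint : ∀ v : T.V, t (g v) = g' (t v) := by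
    intro v
    by_cases hv : v = T.root
    · subst hv
      rw [aut_root T hg, hteq]
      simp only [htFun, if_pos rfl]
      rw [aut_root T hg']
    · obtain ⟨hcfl, hcv⟩ := anc_spec T hv
      set c := anc T v with hc
      have hrfl := rep_firstLevel T hcfl
      set r := rep T c with hr
      set j := jj c with hj
      have hjr : (g ^ j) r = c := hjjspec c hcfl
      have hjlt : j < per g r := hjjlt c hcfl
      have hgcfl : T.FirstLevel (g c) := aut_firstLevel T hg hcfl
      have hgvmem : g v ∈ T.Desc (g c) := (aut_mem_desc T hg).1 hcv
      have hrgc : rep T (g c) = r := by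
        have hmem := sorb_mem_cls T hcfl hgcfl ⟨g, hg, rfl⟩
        rw [rep_eq_of_mem T hmem]
      have hj1 : (g ^ (j + 1)) r = g c := by
        rw [pow_succ', Equiv.Perm.mul_apply, hjr]
      have hw0mem : ((g ^ j)⁻¹) v ∈ T.Desc r := by
        have h1 := (aut_mem_desc T (inv_mem (pow_mem hg j))).1 hcv
        rwa [show ((g ^ j)⁻¹) c = r from by rw [← hjr]; simp] at h1
      set w0 := ((g ^ j)⁻¹) v with hw0
      have hgv : g v = (g ^ (j + 1)) w0 := by
        rw [pow_succ', Equiv.Perm.mul_apply, hw0, Equiv.Perm.apply_inv_self]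
      have htv : tFun v = (g' ^ j) (L r w0) := htval c hcfl v hcv
      show t (g v) = g' (t v)
      have hgoal1 : t (g v) = tFun (g v) := by rw [hteq]
      have hgoal2 : t v = tFun v := by rw [hteq]
      rw [hgoal1, hgoal2, htv]
      rw [htval (g c) hgcfl (g v) hgvmem, hrgc]
      by_cases hcase : j + 1 < per g r
      · have hj2 : jj (g c) = j + 1 := by
          have hle : jj (g c) ≤ j + 1 :=
            Nat.sInf_le (show (g ^ (j + 1)) (rep T (g c)) = g c by rw [hrgc]; exact hj1)
          have hlt2 : jj (g c) < per g r := by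
            have := hjjlt (g c) hgcfl
            rwa [hrgc] at this
          have hmem2 : (g ^ jj (g c)) r = g c := by
            have := hjjspec (g c) hgcfl
            rwa [hrgc] at this
          exact pow_inj_of_lt_per g r hlt2 hcase (by rw [hmem2, hj1])
        rw [hj2]
        have hinv : ((g ^ (j + 1))⁻¹) (g v) = w0 := by
          rw [hgv, Equiv.Perm.inv_apply_self]
        rw [hinv, ← Equiv.Perm.mul_apply, ← pow_succ']
      · have hjeq : j + 1 = per g r := by omega
        have hgcr : g c = r := by rw [← hj1, hjeq, pow_per]
        have hj2 : jj (g c) = 0 := by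
          rw [hgcr]
          exact hjjrep r (by rw [hr]; exact rep_idem T hcfl)
        rw [hj2, pow_zero, pow_zero, inv_one]
        have hvw : g v = (g ^ per g r) w0 := by rw [← hjeq]; exact hgv
        have hrel := (ht0 r hrfl).2 w0 hw0mem
        show L r ((1 : Equiv.Perm T.V) (g v)) = g' ((g' ^ j) (L r w0))
        rw [Equiv.Perm.one_apply, hvw]
        have hLrel : L r ((g ^ per g r) w0) = (g' ^ per g r) (L r w0) := hrel
        rw [hLrel, ← Equiv.Perm.mul_apply, ← pow_succ', hjeq]
  have hmul : t * g = g' * t := by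
    apply Equiv.ext
    intro v
    simp only [Equiv.Perm.mul_apply]
    exact hpoint v
  rw [hmul, mul_inv_cancel_right]

end STAux
namespace STAux

open FRTree

lemma main : ∀ (N : ℕ) (T : FRTree), Fintype.card T.V ≤ N →
    ((∃ g ∈ T.Aut, ∀ u v : T.V, (∃ n : ℕ, (g ^ n) u = v) ↔ ∃ h ∈ T.Aut, h u = v) ∧
     ∀ g ∈ T.Aut, ∀ g' ∈ T.Aut,
      (∀ u v : T.V, (∃ n : ℕ, (g ^ n) u = v) ↔ ∃ h ∈ T.Aut, h u = v) →
      (∀ u v : T.V, (∃ n : ℕ, (g' ^ n) u = v) ↔ ∃ h ∈ T.Aut, h u = v) →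
      ∃ t ∈ T.Aut, t * g * t⁻¹ = g') := by
  intro N
  induction N with
  | zero =>
    intro T hT
    have : 0 < Fintype.card T.V := Fintype.card_pos_iff.2 ⟨T.root⟩
    omega
  | succ N ihN =>
    intro T hT
    have hsub : ∀ c : T.V, T.FirstLevel c → Fintype.card (S T c).V ≤ N := by
      intro c hc
      have h1 : Fintype.card (S T c).V = Fintype.card {v : T.V // v ∈ T.Desc c} :=
        Fintype.card_congr (Equiv.refl _)
      have h2 : Fintype.card {v : T.V // v ∈ T.Desc c} < Fintype.card T.V := by
        classical
        exact Fintype.card_subtype_lt (x := T.root) (root_not_mem_desc T hc)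
      omega
    constructor
    · exact exists_part T (fun c hc => (ihN (S T c) (hsub c hc)).1)
    · intro g hg g' hg' hp hp'
      exact conj_part T (fun c hc => (ihN (S T c) (hsub c hc)).2) g hg g' hg' hp hp'

end STAux

/-- **Corollary.**  There exists an automorphism `g` of `T` whose `⟨g⟩`-orbits coincide
with the orbits of the full group `Aut T` on `T`; moreover, any two automorphisms with
this property are conjugate in `Aut T`. -/
theorem exists_spherically_transitive_automorphism (T : FRTree) :
    (∃ g ∈ T.Aut, ∀ u v : T.V,
      (∃ n : ℕ, (g ^ n) u = v) ↔ ∃ h ∈ T.Aut, h u = v) ∧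
    ∀ g ∈ T.Aut, ∀ g' ∈ T.Aut,
      (∀ u v : T.V, (∃ n : ℕ, (g ^ n) u = v) ↔ ∃ h ∈ T.Aut, h u = v) →
      (∀ u v : T.V, (∃ n : ℕ, (g' ^ n) u = v) ↔ ∃ h ∈ T.Aut, h u = v) →
      ∃ t ∈ T.Aut, t * g * t⁻¹ = g' := by
  exact STAux.main (Fintype.card T.V) T le_rfl
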